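/- (Cayley–Bacharach for arithmetically Gorenstein schemes) Suppose that Γ ⊂ ℙ(U) is a finite arithmetically Gorenstein scheme, and let Γ₁, Γ₂ be mutually residual subschemes of Γ. For any integer d < a(Γ), the failure of Γ₁ to impose independent conditions on forms of degree d is equal to the dimension of the space of forms of degree a(Γ) − d vanishing on Γ₂. -/
import Mathlib


/-!
# Cayley–Bacharach for arithmetically Gorenstein schemes
(Eisenbud–Popescu, Corollary 2.9)

We model a finite scheme `Γ ⊂ ℙ(U) = ℙⁿ⁻¹` over a field `k` by its coordinate algebra
`A = H⁰(O_Γ)` (a finite-dimensional commutative `k`-algebra) together with the restrictions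
`x : Fin n → A` of the ambient coordinates (a trivialization of `O_Γ(1)` being chosen).
The image `Uᵈ ⊆ A` of the restriction map `H⁰(ℙ(U), O(d)) → H⁰(O_Γ(d)) = A` is the span of
the degree-`d` monomials in the `x i`.

* `Γ` *fails to impose independent conditions* on forms of degree `d` iff `Uᵈ ≠ A`; `a(Γ)` is
  the largest `a` with `Uᵃ ≠ A`.
* By Serre duality, `H⁰(K_Γ(-e))` is the `k`-linear dual of `H⁰(O_Γ(e)) = A`, the Serre
  pairing being evaluation; by graded local duality the degree-`m` piece of the canonical
  module `ω_Γ` is the subspace `(U^{-m})^⊥ ⊆ Dual k A` (where `U^e = 0` for `e < 0`).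
* `Γ` is *arithmetically Gorenstein* — i.e. its homogeneous coordinate ring `S_Γ` is
  Gorenstein — iff there is a degree-`a` isomorphism of graded modules `S_Γ(a) ≅ ω_Γ`, i.e.
  iff there is a functional `Φ : Dual k A` such that `f ↦ Φ(f·–)` is bijective and carries
  `U^{m+a}` onto `(ω_Γ)_m` for every `m` (`IsArithGorenstein` below).
* Subschemes `Γ₁, Γ₂ ⊆ Γ` correspond to ideals `I, J ⊆ A`; they are *mutually residual* iff
  `J = (0 : I)` and `I = (0 : J)`.
* The *failure of `Γ₁` to impose independent conditions* on forms of degree `d` is the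
  dimension of the cokernel of the restriction map `Uᵈ → H⁰(O_{Γ₁}(d)) = A/I`, and the
  *space of forms of degree `e` vanishing on `Γ₂`* (forms counted on `Γ`, i.e. modulo those
  vanishing on all of `Γ`) is `U^e ⊓ J`.
-/

open Module Submodule

/-- The span `Uᵈ ⊆ A = H⁰(O_Γ(d))` of the restrictions to `Γ` of the degree-`d` forms. -/
def degForms (k A : Type) [Field k] [CommRing A] [Algebra k A]
    (n : ℕ) (x : Fin n → A) (d : ℕ) : Submodule k A :=
  Submodule.span k {a | ∃ m : Fin n → ℕ, (∑ i, m i) = d ∧ a = ∏ i, x i ^ m i}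

/-- `Uᵈ` for `d : ℤ`, with `Uᵈ = 0` in negative degrees. -/
def degFormsZ (k A : Type) [Field k] [CommRing A] [Algebra k A]
    (n : ℕ) (x : Fin n → A) (d : ℤ) : Submodule k A :=
  if 0 ≤ d then degForms k A n x d.toNat else ⊥

/-- The degree-`m` graded piece of the canonical module `ω_Γ`, viewed inside
`H⁰(K_Γ(-(-m)))… = Dual k A` via graded local duality: `(ω_Γ)_m = (U^{-m})^⊥`. -/
def omegaPiece (k A : Type) [Field k] [CommRing A] [Algebra k A]
    (n : ℕ) (x : Fin n → A) (m : ℤ) : Submodule k (Module.Dual k A) :=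
  (degFormsZ k A n x (-m)).dualAnnihilator

/-- The `k`-linear map `A → Dual k A`, `f ↦ Φ ∘ (f * ·)`; i.e. multiplication into the
(trivialized) canonical module. -/
def galeMap (k A : Type) [Field k] [CommRing A] [Algebra k A]
    (Φ : Module.Dual k A) : A →ₗ[k] Module.Dual k A where
  toFun a := Φ.comp (LinearMap.mulLeft k a)
  map_add' a b := by ext y; simp [add_mul]
  map_smul' c a := by ext y; simp [smul_mul_assoc]

/-- `Γ` is *arithmetically Gorenstein*: there is an isomorphism of graded modules
`S_Γ(a) ≅ ω_Γ` for some `a`, given by multiplication into a functional `Φ`. -/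
def IsArithGorenstein (k A : Type) [Field k] [CommRing A] [Algebra k A]
    (n : ℕ) (x : Fin n → A) : Prop :=
  ∃ (a : ℤ) (Φ : Module.Dual k A), Function.Bijective (galeMap k A Φ) ∧
    ∀ m : ℤ, Submodule.map (galeMap k A Φ) (degFormsZ k A n x (m + a)) = omegaPiece k A n x m

/-- **Cayley–Bacharach for arithmetically Gorenstein schemes**
(Eisenbud–Popescu, Corollary 2.9).  Suppose `Γ ⊂ ℙ(U)` is a finite arithmetically Gorenstein
scheme and `Γ₁, Γ₂` are mutually residual subschemes of `Γ`.  For any integer `d < a(Γ)`, the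
failure of `Γ₁` to impose independent conditions on forms of degree `d` equals the dimension
of the space of forms of degree `a(Γ) - d` vanishing on `Γ₂`. -/
theorem cayley_bacharach_arith_gorenstein
    (k : Type) [Field k] (A : Type) [CommRing A] [Algebra k A] [FiniteDimensional k A]
    (n : ℕ) (x : Fin n → A)
    (hAG : IsArithGorenstein k A n x)
    -- `a = a(Γ)` is the largest integer such that `Γ` fails to impose independent conditions
    -- on forms of degree `a` (the second condition also says `Γ` is closed in `ℙ(U)`):
    (a : ℕ) (hfail : degForms k A n x a ≠ ⊤) (hok : ∀ b : ℕ, a < b → degForms k A n x b = ⊤)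
    -- `Γ₁ = Spec (A/I)` and `Γ₂ = Spec (A/J)` are mutually residual subschemes of `Γ`:
    (I J : Ideal A) (hJ : J = I.annihilator) (hI : I = J.annihilator)
    (d : ℕ) (hd : d < a) :
    -- the failure of `Γ₁` to impose independent conditions on forms of degree `d` ...
    Module.finrank k
        ((A ⧸ I.restrictScalars k) ⧸
          Submodule.map (I.restrictScalars k).mkQ (degForms k A n x d))
      -- ... equals the number of forms of degree `a - d` vanishing on `Γ₂`:
      = Module.finrank k ↥(degForms k A n x (a - d) ⊓ J.restrictScalars k) := by
  classical
  obtain ⟨a', Φ, hbij, hmap⟩ := hAG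
  set g := galeMap k A Φ with hg
  have hnt : Nontrivial A := by
    by_contra h
    rw [not_nontrivial_iff_subsingleton] at h
    exact hfail (Subsingleton.elim _ _)
  -- Step A: for every natural b with a' < b, degForms b = ⊤
  have stepA : ∀ b : ℕ, (a' : ℤ) < b → degForms k A n x b = ⊤ := by
    intro b hb
    have h1 := hmap (-(b : ℤ))
    have h2 : degFormsZ k A n x (-(b : ℤ) + a') = ⊥ := by
      unfold degFormsZ; rw [if_neg (by omega)]
    have h3 : omegaPiece k A n x (-(b : ℤ)) =
        (degForms k A n x b).dualAnnihilator := by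
      unfold omegaPiece degFormsZ
      rw [if_pos (by omega)]
      norm_num
    rw [h2, Submodule.map_bot, h3] at h1
    rw [← Subspace.dualAnnihilator_inj, Submodule.dualAnnihilator_top]
    exact h1.symm
  -- a' is nonnegative
  have ha'0 : 0 ≤ a' := by
    by_contra h
    exact hfail (stepA a (by omega))
  -- Step B: degForms a'.toNat ≠ ⊤
  have stepB : degForms k A n x a'.toNat ≠ ⊤ := by
    intro htop
    have h1 := hmap (-a')
    have h2 : degFormsZ k A n x (-a' + a') = degForms k A n x 0 := by
      unfold degFormsZ; rw [if_pos (by omega)]; norm_num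
    have h3 : omegaPiece k A n x (-a') = (degForms k A n x a'.toNat).dualAnnihilator := by
      unfold omegaPiece degFormsZ
      rw [if_pos (by omega)]; norm_num
    rw [h2, h3, htop, Submodule.dualAnnihilator_top] at h1
    have h1mem : (1 : A) ∈ degForms k A n x 0 :=
      Submodule.subset_span ⟨fun _ => 0, by simp, by simp⟩
    have hg1 : g 1 ∈ Submodule.map g (degForms k A n x 0) := ⟨1, h1mem, rfl⟩
    rw [h1, Submodule.mem_bot] at hg1
    have : (1 : A) = 0 := hbij.1 (by rw [hg1, map_zero])
    exact one_ne_zero this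
  -- a' = a
  have ha' : a' = (a : ℤ) := by
    rcases lt_trichotomy a' (a : ℤ) with h | h | h
    · exact absurd (stepA a h) hfail
    · exact h
    · exact absurd (hok a'.toNat (by omega)) stepB
  -- Step D: map g U^d = (U^{a-d})^⊥
  have stepD : Submodule.map g (degForms k A n x d) =
      (degForms k A n x (a - d)).dualAnnihilator := by
    have h1 := hmap ((d : ℤ) - a)
    have h2 : degFormsZ k A n x ((d : ℤ) - a + a') = degForms k A n x d := by
      unfold degFormsZ; rw [ha', if_pos (by omega)]
      congr 1; omega
    have h3 : omegaPiece k A n x ((d : ℤ) - a) =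
        (degForms k A n x (a - d)).dualAnnihilator := by
      unfold omegaPiece degFormsZ
      rw [if_pos (by omega)]
      congr 2; omega
    rw [h2, h3] at h1
    exact h1
  -- Step E: map g I = J^⊥
  have stepE : Submodule.map g (I.restrictScalars k) =
      (J.restrictScalars k).dualAnnihilator := by
    apply le_antisymm
    · rintro _ ⟨f, hf, rfl⟩
      rw [Submodule.mem_dualAnnihilator]
      intro y hy
      have : f * y = 0 := by
        have hfI : f ∈ I := hf
        rw [hI, Submodule.mem_annihilator] at hfI
        simpa [smul_eq_mul] using hfI y hy
      show Φ (f * y) = 0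
      rw [this, map_zero]
    · intro φ hφ
      obtain ⟨f, rfl⟩ := hbij.2 φ
      refine ⟨f, ?_, rfl⟩
      show f ∈ I
      rw [hI, Submodule.mem_annihilator]
      intro y hy
      rw [smul_eq_mul]
      apply hbij.1
      rw [map_zero]
      ext z
      show Φ (f * y * z) = 0
      rw [Submodule.mem_dualAnnihilator] at hφ
      have hyz : y * z ∈ J := J.mul_mem_right z hy
      have := hφ (y * z) hyz
      show Φ (f * y * z) = 0
      calc Φ (f * y * z) = Φ (f * (y * z)) := by rw [mul_assoc]
        _ = 0 := this
  -- now the dimension count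
  set Ik := I.restrictScalars k
  set Jk := J.restrictScalars k
  set U := degForms k A n x d
  set V := degForms k A n x (a - d)
  have e1 : Module.finrank k ((A ⧸ Ik) ⧸ Submodule.map Ik.mkQ U)
      = Module.finrank k (A ⧸ (Ik ⊔ U)) :=
    LinearEquiv.finrank_eq (Submodule.quotientQuotientEquivQuotientSup Ik U)
  have e2 : Module.finrank k (A ⧸ (Ik ⊔ U)) + Module.finrank k ↥(Ik ⊔ U)
      = Module.finrank k A := Submodule.finrank_quotient_add_finrank _
  have e3 : Submodule.map g (Ik ⊔ U) = (V ⊓ Jk).dualAnnihilator := by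
    rw [Submodule.map_sup, stepE, stepD, Subspace.dualAnnihilator_inf_eq, sup_comm]
  have e4 : Module.finrank k ↥(Ik ⊔ U) = Module.finrank k ↥((V ⊓ Jk).dualAnnihilator) := by
    rw [← e3]
    exact (LinearEquiv.finrank_map_eq (LinearEquiv.ofBijective g hbij) _).symm
  have e5 : Module.finrank k ↥((V ⊓ Jk).dualAnnihilator) = Module.finrank k (A ⧸ (V ⊓ Jk)) :=
    (LinearEquiv.finrank_eq (Subspace.quotEquivAnnihilator (V ⊓ Jk))).symm
  have e6 : Module.finrank k (A ⧸ (V ⊓ Jk)) + Module.finrank k ↥(V ⊓ Jk)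
      = Module.finrank k A := Submodule.finrank_quotient_add_finrank _
  rw [e1]
  omega
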